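/- arXiv:2311.17215 — 4 statements merged into one kernel-verified Lean document; each statement's English description precedes it below -/
import Mathlib

section
/- Let p be an odd prime with p ≡ 2 (mod 3). Then the second moment of the family y² = x³ + x + T³ equals p² + p; that is, Σ_{t=0}^{p−1} ( Σ_{x=0}^{p−1} ((x³ + x + t³)/p) )² = p² + p. -/
open Finset

variable {p : ℕ} [Fact p.Prime]




lemma sm_hchar (hodd : p ≠ 2) : ringChar (ZMod p) ≠ 2 := by
  rw [ZMod.ringChar_zmod_n]; exact hodd

lemma sm_three_not_dvd (hp3 : p % 3 = 2) : ¬ (3 ∣ p - 1) := by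
  intro ⟨k, hk⟩
  have hp2 : 2 ≤ p := (Fact.out : p.Prime).two_le
  omega

lemma sm_cube_bij (hp3 : p % 3 = 2) : Function.Bijective (fun x : ZMod p => x ^ 3) := by
  have : Function.Injective (fun x : ZMod p => x ^ 3) := by
    intro a b hab
    simp only at hab
    rcases eq_or_ne b 0 with rfl | hb
    · simpa [pow_eq_zero_iff] using hab
    · have ha : a ≠ 0 := by
        rintro rfl; exact hb (by simpa [pow_eq_zero_iff, eq_comm] using hab)
      set u : (ZMod p)ˣ := Units.mk0 a ha
      set v : (ZMod p)ˣ := Units.mk0 b hb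
      have huv : (u * v⁻¹) ^ 3 = 1 := by
        have : u ^ 3 = v ^ 3 := by
          ext; simpa [u, v] using hab
        rw [mul_pow, this, inv_pow, mul_inv_cancel]
      have hord : orderOf (u * v⁻¹) ∣ 3 := orderOf_dvd_of_pow_eq_one huv
      have hord2 : orderOf (u * v⁻¹) ∣ p - 1 := by
        simpa [Nat.card_eq_fintype_card, ZMod.card_units_eq_totient,
          Nat.totient_prime (Fact.out : p.Prime)] using orderOf_dvd_card (G := (ZMod p)ˣ)
      have h1 : orderOf (u * v⁻¹) = 1 := by
        rcases (Nat.prime_three.eq_one_or_self_of_dvd _ hord) with h | h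
        · exact h
        · exact absurd (h ▸ hord2) (sm_three_not_dvd hp3)
      have := orderOf_eq_one_iff.mp h1
      have : u = v := by
        rwa [mul_inv_eq_one] at this
      simpa [u, v, Units.ext_iff] using this
  exact ⟨this, Finite.surjective_of_injective this⟩


lemma sm_two_ne_zero (hodd : p ≠ 2) : (2 : ZMod p) ≠ 0 := by
  intro h
  have := (ZMod.natCast_eq_zero_iff 2 p).mp (by exact_mod_cast h)
  exact hodd ((Nat.prime_dvd_prime_iff_eq (Fact.out : p.Prime) Nat.prime_two).mp this)

lemma sm_three_ne_zero (hp3 : p % 3 = 2) : (3 : ZMod p) ≠ 0 := by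
  have hpne3 : p ≠ 3 := by intro h; rw [h] at hp3; norm_num at hp3
  intro h
  have := (ZMod.natCast_eq_zero_iff 3 p).mp (by exact_mod_cast h)
  exact hpne3 ((Nat.prime_dvd_prime_iff_eq (Fact.out : p.Prime) Nat.prime_three).mp this)

lemma sm_four_ne_zero (hodd : p ≠ 2) : (4 : ZMod p) ≠ 0 := by
  intro h
  have h4 : (2 : ZMod p) * 2 = 0 := by linear_combination h
  rcases mul_eq_zero.mp h4 with h | h <;> exact sm_two_ne_zero hodd h

lemma sm_neg3_not_square (hodd : p ≠ 2) (hp3 : p % 3 = 2) : ¬ IsSquare (-3 : ZMod p) := by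
  rintro ⟨u, hu⟩
  rw [← pow_two] at hu
  set w : ZMod p := (u - 1) / 2 with hw
  have hw2 : w * 2 = u - 1 := by
    rw [hw, div_mul_cancel₀ _ (sm_two_ne_zero hodd)]
  have hroot : w ^ 2 + w + 1 = 0 := by
    have h4 : (w ^ 2 + w + 1) * 4 = 0 := by
      linear_combination (2 * w + 1 + u) * hw2 - hu
    rcases mul_eq_zero.mp h4 with h | h
    · exact h
    · exact absurd h (sm_four_ne_zero hodd)
  have hw1 : w ≠ 1 := by
    intro h
    rw [h] at hroot
    exact sm_three_ne_zero hp3 (by linear_combination hroot)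
  have hw0 : w ≠ 0 := by
    intro h
    rw [h] at hroot
    simp at hroot
  set W : (ZMod p)ˣ := Units.mk0 w hw0 with hW
  have hW3 : W ^ 3 = 1 := by
    ext
    simp only [hW, Units.val_pow_eq_pow_val, Units.val_one, Units.val_mk0]
    linear_combination (w - 1) * hroot
  have hord : orderOf W ∣ 3 := orderOf_dvd_of_pow_eq_one hW3
  have hord2 : orderOf W ∣ p - 1 := by
    simpa [Nat.card_eq_fintype_card, ZMod.card_units_eq_totient,
      Nat.totient_prime (Fact.out : p.Prime)] using orderOf_dvd_card (G := (ZMod p)ˣ)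
  rcases Nat.prime_three.eq_one_or_self_of_dvd _ hord with h | h
  · exact hw1 (by simpa [hW, Units.ext_iff] using orderOf_eq_one_iff.mp h)
  · exact sm_three_not_dvd hp3 (h ▸ hord2)


/-- Key lemma: `∑ t, χ((t+a)(t+b)) = p - 1` if `a = b`, else `-1`. -/
lemma sm_key (hodd : p ≠ 2) (a b : ZMod p) :
    ∑ t : ZMod p, quadraticChar (ZMod p) ((t + a) * (t + b))
      = if a = b then (p : ℤ) - 1 else -1 := by
  have hF := sm_hchar hodd
  set χ := quadraticChar (ZMod p) with hχ
  have hshift : ∑ t : ZMod p, χ ((t + a) * (t + b))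
      = ∑ s : ZMod p, χ (s * (s + (b - a))) := by
    rw [← Equiv.sum_comp (Equiv.subRight a) (fun t => χ ((t + a) * (t + b)))]
    apply Finset.sum_congr rfl
    intro s _
    simp only [Equiv.subRight_apply]
    congr 1
    ring
  rw [hshift]
  rcases eq_or_ne a b with rfl | hab
  · rw [if_pos rfl]
    simp only [sub_self, add_zero]
    have h1 : ∀ s : ZMod p, χ (s * s) = 1 - (if s = 0 then 1 else 0) := by
      intro s
      rcases eq_or_ne s 0 with rfl | hs
      · simp [hχ]
      · rw [if_neg hs, ← sq, map_pow, quadraticChar_sq_one hs]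
        ring
    rw [Finset.sum_congr rfl fun s _ => h1 s, Finset.sum_sub_distrib,
      Finset.sum_const, Finset.sum_ite_eq' Finset.univ (0 : ZMod p) (fun _ => (1:ℤ))]
    simp [ZMod.card p]
  · rw [if_neg hab]
    set c := b - a with hc
    have hc0 : c ≠ 0 := sub_ne_zero.mpr (Ne.symm hab)
    have h0 : χ ((0 : ZMod p) * (0 + c)) = 0 := by
      rw [zero_mul]; exact χ.map_zero
    rw [← Finset.sum_erase (f := fun s : ZMod p => χ (s * (s + c))) Finset.univ h0]
    have : ∑ s ∈ Finset.univ.erase (0 : ZMod p), χ (s * (s + c))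
        = ∑ v ∈ Finset.univ.erase (1 : ZMod p), χ v := by
      apply Finset.sum_nbij' (i := fun s => 1 + c * s⁻¹) (j := fun v => c * (v - 1)⁻¹)
      · intro s hs
        have hs0 : s ≠ 0 := Finset.ne_of_mem_erase hs
        simp only [Finset.mem_erase, Finset.mem_univ, and_true]
        intro h
        have : c * s⁻¹ = 0 := by linear_combination h
        rcases mul_eq_zero.mp this with h' | h'
        · exact hc0 h'
        · exact hs0 (inv_eq_zero.mp h')
      · intro v hv
        have hv1 : v ≠ 1 := Finset.ne_of_mem_erase hv
        simp only [Finset.mem_erase, Finset.mem_univ, and_true]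
        intro h
        rcases mul_eq_zero.mp h with h' | h'
        · exact hc0 h'
        · exact hv1 (by rwa [inv_eq_zero, sub_eq_zero] at h')
      · intro s hs
        have hs0 : s ≠ 0 := Finset.ne_of_mem_erase hs
        field_simp
        simp [hc0]
      · intro v hv
        have hv1 : v ≠ 1 := Finset.ne_of_mem_erase hv
        have : v - 1 ≠ 0 := sub_ne_zero.mpr hv1
        field_simp
        ring
      · intro s hs
        have hs0 : s ≠ 0 := Finset.ne_of_mem_erase hs
        have key : s * (s + c) = s ^ 2 * (1 + c * s⁻¹) := by
          field_simp
        rw [key, map_mul, map_pow, quadraticChar_sq_one hs0, one_mul]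
    rw [this, Finset.sum_erase_eq_sub (Finset.mem_univ (1 : ZMod p)), hχ,
      quadraticChar_sum_zero hF]
    simp


lemma sm_sq_add (hodd : p ≠ 2) {d : ZMod p} (hd : d ≠ 0) :
    ∑ x : ZMod p, quadraticChar (ZMod p) (x ^ 2 + d) = -1 := by
  have hF : ringChar (ZMod p) ≠ 2 := by rw [ZMod.ringChar_zmod_n]; exact hodd
  set χ := quadraticChar (ZMod p) with hχ
  have hfib := Finset.sum_fiberwise_of_maps_to' (s := Finset.univ) (t := Finset.univ)
    (g := fun x : ZMod p => x ^ 2) (fun i _ => Finset.mem_univ _) (fun v => χ (v + d))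
  rw [← hfib]
  have hcard : ∀ v : ZMod p,
      ∑ x ∈ Finset.univ.filter (fun x : ZMod p => x ^ 2 = v), χ (v + d)
        = (χ v + 1) * χ (v + d) := by
    intro v
    rw [Finset.sum_const, ← quadraticChar_card_sqrts hF v]
    rw [← Set.toFinset_setOf]
    push_cast
    rw [nsmul_eq_mul]
  rw [Finset.sum_congr rfl fun v _ => hcard v]
  have hsplit : ∀ v : ZMod p, (χ v + 1) * χ (v + d) = χ ((v + 0) * (v + d)) + χ (v + d) := by
    intro v
    rw [add_zero, map_mul]
    ring
  rw [Finset.sum_congr rfl fun v _ => hsplit v, Finset.sum_add_distrib]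
  rw [sm_key hodd 0 d, if_neg (Ne.symm hd)]
  have : ∑ v : ZMod p, χ (v + d) = 0 := by
    rw [← Equiv.sum_comp (Equiv.subRight d) (fun v => χ (v + d))]
    simp only [Equiv.subRight_apply, sub_add_cancel]
    rw [hχ, quadraticChar_sum_zero hF]
  rw [this]
  ring


lemma sm_count (hodd : p ≠ 2) (hp3 : p % 3 = 2) :
    ∑ x : ZMod p, ∑ y : ZMod p, (if x ^ 3 + x = y ^ 3 + y then (1 : ℤ) else 0)
      = 2 * p + 1 := by
  have hF : ringChar (ZMod p) ≠ 2 := by rw [ZMod.ringChar_zmod_n]; exact hodd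
  have h2 := sm_two_ne_zero (p := p) hodd
  have h3 := sm_three_ne_zero (p := p) hp3
  have h4 := sm_four_ne_zero (p := p) hodd
  set χ := quadraticChar (ZMod p) with hχ
  -- pointwise splitting of the indicator
  have hpoint : ∀ x y : ZMod p,
      (if x ^ 3 + x = y ^ 3 + y then (1 : ℤ) else 0)
        = (if y = x then 1 else 0) + (if (2 * y + x) ^ 2 = -(3 * x ^ 2 + 4) then 1 else 0) := by
    intro x y
    have hiff : x ^ 3 + x = y ^ 3 + y ↔ (y = x ∨ (2 * y + x) ^ 2 = -(3 * x ^ 2 + 4)) := by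
      constructor
      · intro h
        have hfac : (y - x) * ((2 * y + x) ^ 2 + (3 * x ^ 2 + 4)) = 0 := by
          linear_combination (-4 : ZMod p) * h
        rcases mul_eq_zero.mp hfac with h' | h'
        · exact Or.inl (sub_eq_zero.mp h')
        · exact Or.inr (by linear_combination h')
      · rintro (rfl | h)
        · rfl
        · have hfac : (y - x) * ((2 * y + x) ^ 2 + (3 * x ^ 2 + 4)) = 0 := by
            rw [show (2 * y + x) ^ 2 + (3 * x ^ 2 + 4) = 0 by linear_combination h, mul_zero]
          have h4' : (4 : ZMod p) * (y ^ 3 + y - (x ^ 3 + x)) = 0 := by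
            linear_combination hfac
          rcases mul_eq_zero.mp h4' with h' | h'
          · exact absurd h' h4
          · linear_combination -h'
    have hnotboth : ¬ (y = x ∧ (2 * y + x) ^ 2 = -(3 * x ^ 2 + 4)) := by
      rintro ⟨rfl, h⟩
      apply sm_neg3_not_square hodd hp3
      have h12 : (4 : ZMod p) * (3 * y ^ 2 + 1) = 0 := by linear_combination h
      rcases mul_eq_zero.mp h12 with h' | h'
      · exact absurd h' h4
      · exact ⟨3 * y, by linear_combination (-3 : ZMod p) * h'⟩
    by_cases hP : y = x
    · subst hP
      rw [if_pos rfl, if_pos rfl, if_neg (fun h => hnotboth ⟨rfl, h⟩)]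
      norm_num
    · rw [if_neg hP]
      by_cases hQ : (2 * y + x) ^ 2 = -(3 * x ^ 2 + 4)
      · rw [if_pos (hiff.mpr (Or.inr hQ)), if_pos hQ]
        norm_num
      · rw [if_neg (fun h => (hiff.mp h).elim hP hQ), if_neg hQ]
        norm_num
  rw [Finset.sum_congr rfl fun x _ => Finset.sum_congr rfl fun y _ => hpoint x y]
  have hx : ∀ x : ZMod p,
      ∑ y : ZMod p, ((if y = x then (1:ℤ) else 0)
          + (if (2 * y + x) ^ 2 = -(3 * x ^ 2 + 4) then 1 else 0))
        = 2 + χ (-(3 * x ^ 2 + 4)) := by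
    intro x
    rw [Finset.sum_add_distrib]
    have e1 : ∑ y : ZMod p, (if y = x then (1:ℤ) else 0) = 1 := by
      rw [Finset.sum_ite_eq' Finset.univ x (fun _ => (1:ℤ)), if_pos (Finset.mem_univ x)]
    have e2 : ∑ y : ZMod p, (if (2 * y + x) ^ 2 = -(3 * x ^ 2 + 4) then (1:ℤ) else 0)
        = χ (-(3 * x ^ 2 + 4)) + 1 := by
      set c := -(3 * x ^ 2 + 4) with hc
      have e : ∀ y : ZMod p, 2 * y + x = ((Equiv.mulLeft₀ 2 h2).trans (Equiv.addRight x)) y := by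
        intro y; simp [Equiv.mulLeft₀, Equiv.trans_apply]
      rw [Finset.sum_congr rfl fun y _ => by rw [e y]]
      rw [Equiv.sum_comp ((Equiv.mulLeft₀ 2 h2).trans (Equiv.addRight x))
        (fun z => if z ^ 2 = c then (1:ℤ) else 0)]
      rw [Finset.sum_boole]
      have := quadraticChar_card_sqrts hF c
      rw [← Set.toFinset_setOf] at *
      exact_mod_cast this
    rw [e1, e2]
    ring
  rw [Finset.sum_congr rfl fun x _ => hx x, Finset.sum_add_distrib, Finset.sum_const,
    Finset.card_univ, ZMod.card]
  have hS : ∑ x : ZMod p, χ (-(3 * x ^ 2 + 4)) = 1 := by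
    have hd : (4 : ZMod p) * 3⁻¹ ≠ 0 := mul_ne_zero h4 (inv_ne_zero h3)
    have hrw : ∀ x : ZMod p, -(3 * x ^ 2 + 4) = (-3) * (x ^ 2 + 4 * 3⁻¹) := by
      intro x
      field_simp
    have hneg3 : χ (-3) = -1 :=
      quadraticChar_neg_one_iff_not_isSquare.mpr (sm_neg3_not_square hodd hp3)
    calc ∑ x : ZMod p, χ (-(3 * x ^ 2 + 4))
        = ∑ x : ZMod p, χ (-3) * χ (x ^ 2 + 4 * 3⁻¹) := by
          refine Finset.sum_congr rfl fun x _ => ?_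
          rw [hrw x, map_mul]
      _ = -1 * ∑ x : ZMod p, χ (x ^ 2 + 4 * 3⁻¹) := by
          rw [← Finset.mul_sum, hneg3]
      _ = 1 := by rw [sm_sq_add hodd hd]; ring
  rw [hS]
  push_cast
  ring


/-- For an odd prime `p ≡ 2 (mod 3)`, the second moment of the family
`y² = x³ + x + T³` equals `p² + p`. -/
theorem second_moment_x_cubed_plus_x_plus_Tcubed (p : ℕ) [Fact p.Prime] (hodd : p ≠ 2)
    (hp3 : p % 3 = 2) :
    ∑ t ∈ Finset.range p,
        (∑ x ∈ Finset.range p, legendreSym p ((x : ℤ) ^ 3 + (x : ℤ) + (t : ℤ) ^ 3)) ^ 2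
      = (p : ℤ) ^ 2 + p := by
  set χ := quadraticChar (ZMod p) with hχ
  have hconv : ∀ f : ZMod p → ℤ, ∑ i ∈ Finset.range p, f (i : ZMod p) = ∑ a : ZMod p, f a := by
    intro f
    exact Finset.sum_nbij' (i := fun n => (n : ZMod p)) (j := fun a => a.val)
      (fun n _ => Finset.mem_univ _)
      (fun a _ => Finset.mem_range.mpr (ZMod.val_lt a))
      (fun n hn => ZMod.val_natCast_of_lt (Finset.mem_range.mp hn))
      (fun a _ => ZMod.natCast_rightInverse a)
      (fun n _ => rfl)
  -- Step 1: convert to sums over ZMod p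
  have step1 : ∑ t ∈ Finset.range p,
        (∑ x ∈ Finset.range p, legendreSym p ((x : ℤ) ^ 3 + (x : ℤ) + (t : ℤ) ^ 3)) ^ 2
      = ∑ t : ZMod p, (∑ x : ZMod p, χ (x ^ 3 + x + t ^ 3)) ^ 2 := by
    rw [← hconv (fun t => (∑ x : ZMod p, χ (x ^ 3 + x + t ^ 3)) ^ 2)]
    refine Finset.sum_congr rfl fun t _ => ?_
    congr 1
    rw [← hconv (fun x => χ (x ^ 3 + x + ((t : ZMod p)) ^ 3))]
    refine Finset.sum_congr rfl fun x _ => ?_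
    show legendreSym p _ = _
    rw [legendreSym, hχ]
    congr 1
    push_cast
    ring
  rw [step1]
  -- Step 2: cube substitution
  have step2 : ∑ t : ZMod p, (∑ x : ZMod p, χ (x ^ 3 + x + t ^ 3)) ^ 2
      = ∑ t : ZMod p, (∑ x : ZMod p, χ (x ^ 3 + x + t)) ^ 2 :=
    Fintype.sum_bijective (fun t : ZMod p => t ^ 3) (sm_cube_bij hp3)
      (fun t => (∑ x : ZMod p, χ (x ^ 3 + x + t ^ 3)) ^ 2)
      (fun t => (∑ x : ZMod p, χ (x ^ 3 + x + t)) ^ 2)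
      (fun t => rfl)
  rw [step2]
  -- Step 3: expand square, swap sums, apply key lemma
  have step3 : ∀ t : ZMod p, (∑ x : ZMod p, χ (x ^ 3 + x + t)) ^ 2
      = ∑ x : ZMod p, ∑ y : ZMod p, χ ((t + (x ^ 3 + x)) * (t + (y ^ 3 + y))) := by
    intro t
    rw [sq, Finset.sum_mul_sum]
    refine Finset.sum_congr rfl fun x _ => Finset.sum_congr rfl fun y _ => ?_
    rw [← map_mul]
    congr 1
    ring
  rw [Finset.sum_congr rfl fun t _ => step3 t]
  rw [Finset.sum_comm]
  rw [Finset.sum_congr rfl fun x (_ : x ∈ Finset.univ) => Finset.sum_comm]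
  have step4 : ∀ x y : ZMod p,
      ∑ t : ZMod p, χ ((t + (x ^ 3 + x)) * (t + (y ^ 3 + y)))
        = (p : ℤ) * (if x ^ 3 + x = y ^ 3 + y then 1 else 0) - 1 := by
    intro x y
    rw [hχ, sm_key hodd (x ^ 3 + x) (y ^ 3 + y)]
    split <;> ring
  rw [Finset.sum_congr rfl fun x _ => Finset.sum_congr rfl fun y _ => step4 x y]
  simp only [Finset.sum_sub_distrib, ← Finset.mul_sum]
  rw [sm_count hodd hp3]
  simp [ZMod.card p, Finset.sum_const, Finset.card_univ]
  ring
end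

section
/- Let δ be a real-valued function on the primes and suppose there is a constant C with |δ(p)| ≤ C for all primes p. Then (1/π(x)) · Σ_{p ≤ x, p prime} δ(p)·p^{−1/2} tends to 0 as x → ∞, where π(x) denotes the number of primes at most x. -/
open Filter Finset

lemma filter_range_eq_image_nth :
    ∀ n : ℕ, (Finset.range n).filter Nat.Prime =
      Finset.image (Nat.nth Nat.Prime) (Finset.range (Nat.count Nat.Prime n)) := by
  intro n
  ext a
  simp only [Finset.mem_filter, Finset.mem_image, Finset.mem_range]
  constructor
  · rintro ⟨ha, hp⟩
    exact ⟨Nat.count Nat.Prime a, Nat.count_strict_mono hp ha, Nat.nth_count hp⟩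
  · rintro ⟨i, hi, rfl⟩
    exact ⟨Nat.nth_lt_of_lt_count hi,
      Nat.nth_mem_of_infinite Nat.infinite_setOf_prime i⟩

/-- If `δ` is a real-valued function bounded by `C` on the primes, then
`(1/π(x)) · ∑_{p ≤ x, p prime} δ(p)·p^{−1/2} → 0` as `x → ∞`. -/
theorem average_of_bounded_over_sqrt_tendsto_zero (δ : ℕ → ℝ) (C : ℝ)
    (hC : ∀ p : ℕ, p.Prime → |δ p| ≤ C) :
    Filter.Tendsto
      (fun x : ℕ =>
        (1 / (Nat.primeCounting x : ℝ)) *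
          ∑ p ∈ (Finset.range (x + 1)).filter Nat.Prime,
            δ p * (p : ℝ) ^ (-(1 / 2 : ℝ)))
      Filter.atTop (nhds 0) := by
  set u : ℕ → ℝ := fun k => δ (Nat.nth Nat.Prime k) *
    (Nat.nth Nat.Prime k : ℝ) ^ (-(1 / 2 : ℝ)) with hu
  have hnth : Tendsto (fun k => Nat.nth Nat.Prime k) atTop atTop :=
    (Nat.nth_strictMono Nat.infinite_setOf_prime).tendsto_atTop
  have hu0 : Tendsto u atTop (nhds 0) := by
    have h1 : Tendsto (fun k => ((Nat.nth Nat.Prime k : ℝ)) ^ (-(1 / 2 : ℝ)))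
        atTop (nhds 0) := by
      have := (tendsto_rpow_neg_atTop (y := (1/2 : ℝ)) (by norm_num)).comp
        (tendsto_natCast_atTop_atTop.comp hnth)
      exact this
    have : Tendsto (fun k => max C 0 * ((Nat.nth Nat.Prime k : ℝ)) ^ (-(1 / 2 : ℝ)))
        atTop (nhds 0) := by simpa using h1.const_mul (max C 0)
    apply squeeze_zero_norm _ this
    intro k
    rw [hu, Real.norm_eq_abs, abs_mul]
    have hp := Nat.nth_mem_of_infinite Nat.infinite_setOf_prime k
    refine mul_le_mul ((hC _ hp).trans (le_max_left _ _))
      (le_of_eq (abs_of_nonneg (by positivity))) (abs_nonneg _) (le_max_right _ _)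
  have hc : Tendsto (fun n : ℕ => (n : ℝ)⁻¹ • ∑ i ∈ Finset.range n, u i)
      atTop (nhds 0) := hu0.cesaro
  have key := hc.comp Nat.tendsto_primeCounting
  refine key.congr fun x => ?_
  simp only [Function.comp_apply, smul_eq_mul, one_div]
  congr 1
  have : Nat.primeCounting x = Nat.count Nat.Prime (x + 1) := rfl
  rw [this, filter_range_eq_image_nth (x + 1),
    Finset.sum_image (fun a _ b _ h =>
      (Nat.nth_injective Nat.infinite_setOf_prime) h)]
  norm_num [hu]
end

section
/- Let p be an odd prime. Then the second moment of the family y² = x³ + 4(4T+2)x, namely Σ_{t=0}^{p−1} ( Σ_{x=0}^{p−1} ((x³ + (16t+8)x)/p) )², equals 2p² − 2p if p ≡ 1 (mod 4) and equals 0 if p ≡ 3 (mod 4). -/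
open Finset

section Aux

variable {p : ℕ} [Fact p.Prime]

private lemma char_ne_two (hp : p ≠ 2) : ringChar (ZMod p) ≠ 2 := by
  rw [ZMod.ringChar_zmod_n]; exact hp

private lemma sum_shift (hp : p ≠ 2) {a : ZMod p} (ha : a ≠ 0) :
    ∑ c : ZMod p, quadraticChar (ZMod p) c * quadraticChar (ZMod p) (c + a) = -1 := by
  classical
  have hchar := char_ne_two hp
  have h0 : ∑ c ∈ univ.erase (0 : ZMod p),
      quadraticChar (ZMod p) c * quadraticChar (ZMod p) (c + a)
      = ∑ e ∈ univ.erase (1 : ZMod p), quadraticChar (ZMod p) e := by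
    refine sum_nbij' (fun c => 1 + a * c⁻¹) (fun e => a * (e - 1)⁻¹) ?_ ?_ ?_ ?_ ?_
    · intro c hc
      have hc0 : c ≠ 0 := by simpa using (mem_erase.mp hc).1
      simp only [mem_erase, mem_univ, and_true]
      intro h
      have h' : a * c⁻¹ = 0 := by linear_combination h
      exact ha ((mul_eq_zero.mp h').resolve_right (inv_ne_zero hc0))
    · intro e he
      have he1 : e ≠ 1 := by simpa using (mem_erase.mp he).1
      simp only [mem_erase, mem_univ, and_true]
      exact mul_ne_zero ha (inv_ne_zero (sub_ne_zero.mpr he1))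
    · intro c hc
      have hc0 : c ≠ 0 := by simpa using (mem_erase.mp hc).1
      show a * ((1 + a * c⁻¹) - 1)⁻¹ = c
      have h1 : (1 + a * c⁻¹) - 1 = a * c⁻¹ := by ring
      rw [h1, mul_inv, inv_inv, ← mul_assoc, mul_inv_cancel₀ ha, one_mul]
    · intro e he
      have he1 : e ≠ 1 := by simpa using (mem_erase.mp he).1
      have h1 : e - 1 ≠ 0 := sub_ne_zero.mpr he1
      show 1 + a * (a * (e - 1)⁻¹)⁻¹ = e
      rw [mul_inv, inv_inv, ← mul_assoc, mul_inv_cancel₀ ha, one_mul]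
      ring
    · intro c hc
      have hc0 : c ≠ 0 := by simpa using (mem_erase.mp hc).1
      have hca : c + a = c * (1 + a * c⁻¹) := by field_simp
      rw [hca, map_mul, ← mul_assoc, ← sq, quadraticChar_sq_one hc0, one_mul]
  have h1 : ∑ e ∈ univ.erase (1 : ZMod p), quadraticChar (ZMod p) e = -1 := by
    have h := quadraticChar_sum_zero (F := ZMod p) hchar
    rw [← Finset.sum_erase_add univ _ (mem_univ (1 : ZMod p))] at h
    simp only [map_one] at h
    linarith
  have h2 := Finset.sum_erase_add univ
    (fun c => quadraticChar (ZMod p) c * quadraticChar (ZMod p) (c + a)) (mem_univ (0 : ZMod p))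
  simp only [MulChar.map_zero, zero_mul, add_zero] at h2
  rw [← h2, h0, h1]

private lemma sum_pair_shift (hp : p ≠ 2) (u v : ZMod p) :
    ∑ c : ZMod p, quadraticChar (ZMod p) (c + u) * quadraticChar (ZMod p) (c + v)
      = if u = v then (p : ℤ) - 1 else -1 := by
  classical
  have hchar := char_ne_two hp
  have key : ∑ c : ZMod p, quadraticChar (ZMod p) (c + u) * quadraticChar (ZMod p) (c + v)
      = ∑ c : ZMod p, quadraticChar (ZMod p) c * quadraticChar (ZMod p) (c + (v - u)) := by
    refine Fintype.sum_equiv (Equiv.addRight u) _ _ fun c => ?_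
    simp only [Equiv.coe_addRight]
    ring_nf
  rw [key]
  by_cases huv : u = v
  · subst huv
    simp only [sub_self, add_zero, if_true]
    have h2 := Finset.sum_erase_add univ
      (fun c => quadraticChar (ZMod p) c * quadraticChar (ZMod p) c) (mem_univ (0 : ZMod p))
    simp only [MulChar.map_zero, zero_mul, add_zero] at h2
    rw [← h2]
    have : ∀ c ∈ univ.erase (0 : ZMod p),
        quadraticChar (ZMod p) c * quadraticChar (ZMod p) c = 1 := fun c hc => by
      have hc0 : c ≠ 0 := by simpa using (mem_erase.mp hc).1
      rw [← sq, quadraticChar_sq_one hc0]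
    rw [Finset.sum_congr rfl this, Finset.sum_const, card_erase_of_mem (mem_univ _),
      card_univ, ZMod.card]
    simp [Nat.cast_sub (Nat.one_le_iff_ne_zero.mpr (Fact.out : p.Prime).pos.ne')]
  · rw [if_neg huv]
    exact sum_shift hp (sub_ne_zero.mpr (Ne.symm huv))

private lemma second_moment_zmod (hp : p ≠ 2) :
    ∑ c : ZMod p, (∑ x : ZMod p, quadraticChar (ZMod p) (x ^ 3 + c * x)) ^ 2
      = (p : ℤ) * ((p : ℤ) - 1) * (1 + quadraticChar (ZMod p) (-1)) := by
  classical
  have hchar := char_ne_two hp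
  have hsplit : ∀ (c x : ZMod p), quadraticChar (ZMod p) (x ^ 3 + c * x)
      = quadraticChar (ZMod p) x * quadraticChar (ZMod p) (x ^ 2 + c) := fun c x => by
    rw [← map_mul]; ring_nf
  have step1 : ∑ c : ZMod p, (∑ x : ZMod p, quadraticChar (ZMod p) (x ^ 3 + c * x)) ^ 2
      = ∑ x : ZMod p, ∑ y : ZMod p,
          (quadraticChar (ZMod p) x * quadraticChar (ZMod p) y) *
            ∑ c : ZMod p, quadraticChar (ZMod p) (c + x ^ 2) * quadraticChar (ZMod p) (c + y ^ 2) := by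
    simp_rw [hsplit, sq, Finset.sum_mul_sum, Finset.mul_sum]
    rw [Finset.sum_comm]
    refine Finset.sum_congr rfl fun x _ => ?_
    rw [Finset.sum_comm]
    refine Finset.sum_congr rfl fun y _ => ?_
    refine Finset.sum_congr rfl fun c _ => ?_
    ring_nf
  rw [step1]
  have step2 : ∀ x y : ZMod p,
      (quadraticChar (ZMod p) x * quadraticChar (ZMod p) y) *
        ∑ c : ZMod p, quadraticChar (ZMod p) (c + x ^ 2) * quadraticChar (ZMod p) (c + y ^ 2)
      = (quadraticChar (ZMod p) x * quadraticChar (ZMod p) y) *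
          (if x ^ 2 = y ^ 2 then (p : ℤ) else 0)
        - quadraticChar (ZMod p) x * quadraticChar (ZMod p) y := fun x y => by
    rw [sum_pair_shift hp]
    by_cases h : x ^ 2 = y ^ 2
    · rw [if_pos h, if_pos h]; ring
    · rw [if_neg h, if_neg h]; ring
  simp_rw [step2, Finset.sum_sub_distrib]
  have hz : ∑ x : ZMod p, ∑ y : ZMod p,
      quadraticChar (ZMod p) x * quadraticChar (ZMod p) y = 0 := by
    simp_rw [← Finset.mul_sum, quadraticChar_sum_zero hchar, mul_zero, Finset.sum_const_zero]
  rw [hz, sub_zero]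
  have inner : ∀ x : ZMod p,
      ∑ y : ZMod p, (quadraticChar (ZMod p) x * quadraticChar (ZMod p) y) *
          (if x ^ 2 = y ^ 2 then (p : ℤ) else 0)
      = if x = 0 then 0 else (p : ℤ) * (1 + quadraticChar (ZMod p) (-1)) := by
    intro x
    by_cases hx : x = 0
    · simp [hx]
    · rw [if_neg hx]
      have hxne : x ≠ -x := fun h => hx (by
        have := (Ring.eq_self_iff_eq_zero_of_char_ne_two hchar).mp h.symm
        exact this)
      have hsub : ({x, -x} : Finset (ZMod p)) ⊆ univ := subset_univ _
      rw [← Finset.sum_subset hsub (fun y _ hy => ?_)]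
      · rw [Finset.sum_pair hxne]
        have h1 : (x : ZMod p) ^ 2 = x ^ 2 := rfl
        have h2 : x ^ 2 = (-x) ^ 2 := by ring
        rw [if_pos h1, if_pos h2, ← sq, quadraticChar_sq_one hx]
        have : quadraticChar (ZMod p) x * quadraticChar (ZMod p) (-x)
            = quadraticChar (ZMod p) (-1) := by
          rw [show (-x : ZMod p) = -1 * x by ring, map_mul, mul_comm (quadraticChar (ZMod p) (-1)),
            ← mul_assoc, ← sq, quadraticChar_sq_one hx, one_mul]
        rw [this]; ring
      · have : x ^ 2 ≠ y ^ 2 := by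
          intro h
          rcases sq_eq_sq_iff_eq_or_eq_neg.mp h with h' | h'
          · exact hy (by simp [h'])
          · exact hy (by simp [h'])
        rw [if_neg this, mul_zero]
  simp_rw [inner]
  rw [← Finset.sum_erase_add univ _ (mem_univ (0 : ZMod p))]
  rw [if_pos rfl, add_zero]
  have hK : ∀ x ∈ univ.erase (0 : ZMod p),
      (if x = 0 then (0:ℤ) else (p : ℤ) * (1 + quadraticChar (ZMod p) (-1)))
      = (p : ℤ) * (1 + quadraticChar (ZMod p) (-1)) := fun x hx => by
    rw [if_neg (by simpa using (mem_erase.mp hx).1)]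
  rw [Finset.sum_congr rfl hK, Finset.sum_const, card_erase_of_mem (mem_univ _),
    card_univ, ZMod.card, nsmul_eq_mul,
    Nat.cast_sub (Nat.one_le_iff_ne_zero.mpr (Fact.out : p.Prime).pos.ne')]
  push_cast
  ring

end Aux

private lemma sum_range_eq {p : ℕ} [Fact p.Prime] (f : ZMod p → ℤ) :
    ∑ i ∈ range p, f (i : ZMod p) = ∑ x : ZMod p, f x := by
  refine Finset.sum_nbij' (fun i => (i : ZMod p)) (fun x => x.val)
    (fun i _ => mem_univ _) (fun x _ => mem_range.mpr (ZMod.val_lt x))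
    (fun i hi => by rw [ZMod.val_natCast_of_lt (mem_range.mp hi)])
    (fun x _ => by rw [ZMod.natCast_val, ZMod.cast_id])
    (fun i _ => rfl)

/-- For an odd prime `p`, the second moment of the family
`y² = x³ + 4(4T+2)x` equals `2p² − 2p` if `p ≡ 1 (mod 4)` and `0` if `p ≡ 3 (mod 4)`. -/
theorem second_moment_cm_family_mod_four (p : ℕ) [Fact p.Prime] (hodd : p ≠ 2) :
    (p % 4 = 1 →
      ∑ t ∈ Finset.range p,
          (∑ x ∈ Finset.range p,
              legendreSym p ((x : ℤ) ^ 3 + (16 * (t : ℤ) + 8) * (x : ℤ))) ^ 2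
        = 2 * (p : ℤ) ^ 2 - 2 * p) ∧
    (p % 4 = 3 →
      ∑ t ∈ Finset.range p,
          (∑ x ∈ Finset.range p,
              legendreSym p ((x : ℤ) ^ 3 + (16 * (t : ℤ) + 8) * (x : ℤ))) ^ 2
        = 0) := by
  classical
  have hchar := char_ne_two (p := p) hodd
  have key : ∀ a : ℤ, legendreSym p a = quadraticChar (ZMod p) ((a : ZMod p)) := fun a => rfl
  have h16 : (16 : ZMod p) ≠ 0 := by
    have h : ((16 : ℕ) : ZMod p) ≠ 0 := by
      rw [Ne, ZMod.natCast_eq_zero_iff]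
      intro h
      have h2 : p ∣ 2 := (Fact.out : p.Prime).dvd_of_dvd_pow (n := 4) (by norm_num at h ⊢; exact h)
      exact hodd ((Nat.prime_dvd_prime_iff_eq Fact.out Nat.prime_two).mp h2)
    simpa using h
  have main : ∑ t ∈ Finset.range p,
      (∑ x ∈ Finset.range p,
          legendreSym p ((x : ℤ) ^ 3 + (16 * (t : ℤ) + 8) * (x : ℤ))) ^ 2
      = (p : ℤ) * ((p : ℤ) - 1) * (1 + quadraticChar (ZMod p) (-1)) := by
    have step1 : ∑ t ∈ Finset.range p,
        (∑ x ∈ Finset.range p,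
            legendreSym p ((x : ℤ) ^ 3 + (16 * (t : ℤ) + 8) * (x : ℤ))) ^ 2
        = ∑ t ∈ Finset.range p, (∑ x ∈ Finset.range p,
            quadraticChar (ZMod p)
              ((x : ZMod p) ^ 3 + (16 * (t : ZMod p) + 8) * (x : ZMod p))) ^ 2 := by
      refine sum_congr rfl fun t _ => ?_
      congr 1
      refine sum_congr rfl fun x _ => ?_
      rw [key]
      congr 1
      push_cast
      ring
    rw [step1]
    have step2 : ∀ t : ZMod p,
        (∑ x ∈ Finset.range p,
            quadraticChar (ZMod p) ((x : ZMod p) ^ 3 + (16 * t + 8) * (x : ZMod p))) ^ 2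
        = (∑ x : ZMod p, quadraticChar (ZMod p) (x ^ 3 + (16 * t + 8) * x)) ^ 2 := fun t => by
      rw [sum_range_eq (fun x => quadraticChar (ZMod p) (x ^ 3 + (16 * t + 8) * x))]
    calc ∑ t ∈ Finset.range p, (∑ x ∈ Finset.range p,
            quadraticChar (ZMod p)
              ((x : ZMod p) ^ 3 + (16 * (t : ZMod p) + 8) * (x : ZMod p))) ^ 2
        = ∑ t : ZMod p,
            (∑ x : ZMod p, quadraticChar (ZMod p) (x ^ 3 + (16 * t + 8) * x)) ^ 2 := by
          rw [← sum_range_eq (fun t : ZMod p =>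
            (∑ x : ZMod p, quadraticChar (ZMod p) (x ^ 3 + (16 * t + 8) * x)) ^ 2)]
          exact sum_congr rfl fun t _ => step2 (t : ZMod p)
      _ = ∑ c : ZMod p, (∑ x : ZMod p, quadraticChar (ZMod p) (x ^ 3 + c * x)) ^ 2 := by
          refine Fintype.sum_equiv ((Equiv.mulLeft₀ 16 h16).trans (Equiv.addRight 8)) _ _
            fun t => ?_
          simp [Equiv.mulLeft₀]
      _ = (p : ℤ) * ((p : ℤ) - 1) * (1 + quadraticChar (ZMod p) (-1)) :=
          second_moment_zmod hodd
  constructor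
  · intro h1
    rw [main, quadraticChar_neg_one hchar, ZMod.card, ZMod.χ₄_nat_one_mod_four h1]
    ring
  · intro h3
    rw [main, quadraticChar_neg_one hchar, ZMod.card, ZMod.χ₄_nat_three_mod_four h3]
    ring
end

section
/- Let p be an odd prime. Then the first moment of the family y² = x³ + Tx² − (T+3)x + 1 equals −2p·c_{p,1;4}, where c_{p,1;4} = 1 if p ≡ 1 (mod 4) and 0 otherwise; that is, Σ_{t=0}^{p−1} ( −Σ_{x=0}^{p−1} ((x³ + t·x² − (t+3)x + 1)/p) ) = −2p·c_{p,1;4}. -/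
lemma sum_range_zmod (p : ℕ) [NeZero p] (f : ZMod p → ℤ) :
    ∑ i ∈ Finset.range p, f i = ∑ a : ZMod p, f a := by
  exact Finset.sum_nbij' (fun i => (i : ZMod p)) (fun a => a.val)
    (fun a _ => Finset.mem_univ _) (fun a _ => Finset.mem_range.2 (ZMod.val_lt a))
    (fun a ha => ZMod.val_cast_of_lt (Finset.mem_range.1 ha))
    (fun a _ => (ZMod.natCast_val a).trans (ZMod.cast_id p a)) (fun a _ => rfl)

lemma shift_sum (p : ℕ) [Fact p.Prime] (hodd : p ≠ 2) (a b : ZMod p) (ha : a ≠ 0) :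
    ∑ t : ZMod p, quadraticChar (ZMod p) (a * t + b) = 0 := by
  have hbij : Function.Bijective (fun t : ZMod p => a * t + b) := by
    constructor
    · intro x y hxy
      simp only [add_left_inj] at hxy
      exact mul_left_cancel₀ ha hxy
    · intro y
      exact ⟨a⁻¹ * (y - b), by field_simp; ring⟩
  rw [Fintype.sum_bijective _ hbij _ (fun x => quadraticChar (ZMod p) x) (fun t => rfl)]
  exact quadraticChar_sum_zero ((ZMod.ringChar_zmod_n p).trans_ne hodd)

/-- For an odd prime `p`, the first moment of the family
`y² = x³ + Tx² − (T+3)x + 1` equals `−2p·c_{p,1;4}`, where `c_{p,1;4} = 1`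
if `p ≡ 1 (mod 4)` and `0` otherwise. -/
theorem first_moment_washington_family (p : ℕ) [Fact p.Prime] (hodd : p ≠ 2) :
    ∑ t ∈ Finset.range p,
        (- ∑ x ∈ Finset.range p,
            legendreSym p
              ((x : ℤ) ^ 3 + (t : ℤ) * (x : ℤ) ^ 2 - ((t : ℤ) + 3) * (x : ℤ) + 1))
      = -2 * (p : ℤ) * (if p % 4 = 1 then 1 else 0) := by
  have hp := (Fact.out : p.Prime)
  have hchar : ringChar (ZMod p) ≠ 2 := (ZMod.ringChar_zmod_n p).trans_ne hodd
  have key : ∀ (t x : ℕ),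
      legendreSym p ((x : ℤ) ^ 3 + (t : ℤ) * (x : ℤ) ^ 2 - ((t : ℤ) + 3) * (x : ℤ) + 1)
        = quadraticChar (ZMod p)
            (((x : ZMod p) ^ 2 - (x : ZMod p)) * (t : ZMod p)
              + ((x : ZMod p) ^ 3 - 3 * (x : ZMod p) + 1)) := by
    intro t x
    rw [legendreSym]
    congr 1
    push_cast
    ring
  have h01 : (0 : ZMod p) ≠ 1 := zero_ne_one
  calc ∑ t ∈ Finset.range p,
        (- ∑ x ∈ Finset.range p,
            legendreSym p ((x : ℤ) ^ 3 + (t : ℤ) * (x : ℤ) ^ 2 - ((t : ℤ) + 3) * (x : ℤ) + 1))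
      = - ∑ x : ZMod p, ∑ t : ZMod p, quadraticChar (ZMod p)
            ((x ^ 2 - x) * t + (x ^ 3 - 3 * x + 1)) := by
        simp only [key]
        rw [sum_range_zmod p (fun t => - ∑ x ∈ Finset.range p,
              quadraticChar (ZMod p) (((x : ZMod p) ^ 2 - (x : ZMod p)) * t
                + ((x : ZMod p) ^ 3 - 3 * (x : ZMod p) + 1))),
            Finset.sum_neg_distrib]
        congr 1
        have h2 : ∀ t : ZMod p, ∑ x ∈ Finset.range p,
            quadraticChar (ZMod p) (((x : ZMod p) ^ 2 - (x : ZMod p)) * t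
              + ((x : ZMod p) ^ 3 - 3 * (x : ZMod p) + 1))
            = ∑ x : ZMod p, quadraticChar (ZMod p) ((x ^ 2 - x) * t + (x ^ 3 - 3 * x + 1)) :=
          fun t => sum_range_zmod p (fun x => quadraticChar (ZMod p) ((x ^ 2 - x) * t + (x ^ 3 - 3 * x + 1)))
        simp_rw [h2]
        exact Finset.sum_comm
    _ = - ∑ x ∈ ({0, 1} : Finset (ZMod p)), ∑ t : ZMod p, quadraticChar (ZMod p)
            ((x ^ 2 - x) * t + (x ^ 3 - 3 * x + 1)) := by
        congr 1
        refine (Finset.sum_subset (Finset.subset_univ _) ?_).symm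
        intro x _ hx
        simp only [Finset.mem_insert, Finset.mem_singleton, not_or] at hx
        refine shift_sum p hodd _ _ ?_
        have : x ^ 2 - x = x * (x - 1) := by ring
        rw [this]
        exact mul_ne_zero hx.1 (sub_ne_zero.2 hx.2)
    _ = - ((p : ℤ) + (p : ℤ) * quadraticChar (ZMod p) (-1)) := by
        rw [Finset.sum_pair h01]
        have e0 : ∀ t : ZMod p, ((0 : ZMod p) ^ 2 - 0) * t + ((0 : ZMod p) ^ 3 - 3 * 0 + 1) = 1 :=
          fun t => by ring
        have e1 : ∀ t : ZMod p, ((1 : ZMod p) ^ 2 - 1) * t + ((1 : ZMod p) ^ 3 - 3 * 1 + 1) = -1 :=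
          fun t => by ring
        simp_rw [e0, e1]
        rw [Finset.sum_const, Finset.sum_const, map_one]
        simp [ZMod.card, nsmul_eq_mul]
    _ = -2 * (p : ℤ) * (if p % 4 = 1 then 1 else 0) := by
        have hmod : p % 2 = 1 := (Nat.Prime.mod_two_eq_one_iff_ne_two hp).2 hodd ▸ rfl
        by_cases h4 : p % 4 = 1
        · have hsq : IsSquare (-1 : ZMod p) := ZMod.exists_sq_eq_neg_one_iff.2 (by omega)
          have hne : (-1 : ZMod p) ≠ 0 := neg_ne_zero.2 one_ne_zero
          rw [(quadraticChar_one_iff_isSquare hne).2 hsq]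
          simp [h4]; ring
        · have h3 : p % 4 = 3 := by omega
          have hsq : ¬ IsSquare (-1 : ZMod p) := fun h =>
            (ZMod.exists_sq_eq_neg_one_iff.1 h) h3
          rw [quadraticChar_neg_one_iff_not_isSquare.2 hsq]
          simp [h4]
end
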